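/- Let e* be an edge on V with e* ∉ E and E' := E ∪ {e*}. Let χ : E → C ∪ {⊥} and χ' : E' → C ∪ {⊥} be tentative colorings, let χ̂ : E' → C ∪ {⊥} extend χ by setting χ̂(e*) := ⊥, and set A := {e ∈ E' : χ̂(e) ≠ χ'(e)}. Then |F(E, χ) ⊕ F(E', χ')| ≤ 4·|A| + 1. -/

import Mathlib

/-- For a finite set `E` of edges (unordered pairs of distinct vertices), a palette `C`,
and a tentative coloring `χ : E → C ∪ {⊥}` (modelled as `Sym2 V → Option C`), the failed set
`F(E, χ) := {e ∈ E : χ(e) = ⊥} ∪ {e ∈ E : ∃ f ∈ E adjacent to e with χ(f) = χ(e) ≠ ⊥}`,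
where two edges are adjacent iff they are distinct and share an endpoint. -/
def failedSet {V : Type*} {C : Type*} (E : Set (Sym2 V)) (χ : Sym2 V → Option C) :
    Set (Sym2 V) :=
  {e ∈ E | χ e = none} ∪
    {e ∈ E | χ e ≠ none ∧ ∃ f ∈ E, f ≠ e ∧ (∃ x, x ∈ e ∧ x ∈ f) ∧ χ f = χ e}

/-- If `e` is failed under `χa` but not `χb` while `χa e = χb e`, then it has a
witness neighbor on which the colorings differ. -/
theorem witness_lemma {V : Type*} {C : Type*} (E' : Finset (Sym2 V))
    (χa χb : Sym2 V → Option C) (e : Sym2 V) (heE : e ∈ E') (heq : χa e = χb e)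
    (h1 : e ∈ failedSet (E' : Set (Sym2 V)) χa)
    (h2 : e ∉ failedSet (E' : Set (Sym2 V)) χb) :
    ∃ p : Sym2 V × V, p.1 ∈ E' ∧ χa p.1 ≠ χb p.1 ∧ p.2 ∈ e ∧ p.2 ∈ p.1 ∧ p.1 ≠ e ∧
      χa p.1 = χa e ∧ χa e ≠ none := by
  rcases h1 with ⟨_, hnone⟩ | ⟨_, hne, f, hfE, hfe, ⟨x, hxe, hxf⟩, hcol⟩
  · exact absurd (Or.inl ⟨heE, by rw [← heq]; exact hnone⟩) h2
  · refine ⟨(f, x), hfE, ?_, hxe, hxf, hfe, hcol, hne⟩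
    intro hcontra
    refine h2 (Or.inr ⟨heE, by rw [← heq]; exact hne, f, hfE, hfe, ⟨x, hxe, hxf⟩, ?_⟩)
    rw [← hcontra, hcol, heq]

theorem key_count {V : Type*} {C : Type*} (E' : Finset (Sym2 V))
    (χ₁ χ₂ : Sym2 V → Option C) :
    (symmDiff (failedSet (E' : Set (Sym2 V)) χ₁)
        (failedSet (E' : Set (Sym2 V)) χ₂)).ncard ≤
      4 * {e | e ∈ E' ∧ χ₁ e ≠ χ₂ e}.ncard := by
  classical
  set F1 := failedSet (E' : Set (Sym2 V)) χ₁ with hF1def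
  set F2 := failedSet (E' : Set (Sym2 V)) χ₂ with hF2def
  set SD := symmDiff F1 F2 with hSDdef
  have hsub1 : F1 ⊆ (E' : Set (Sym2 V)) := by
    rintro e (⟨h, _⟩ | ⟨h, _⟩) <;> exact h
  have hsub2 : F2 ⊆ (E' : Set (Sym2 V)) := by
    rintro e (⟨h, _⟩ | ⟨h, _⟩) <;> exact h
  have hSDsub : SD ⊆ (E' : Set (Sym2 V)) := by
    intro e he
    rcases Set.mem_symmDiff.mp he with ⟨h, _⟩ | ⟨h, _⟩
    · exact hsub1 h
    · exact hsub2 h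
  have hfin : SD.Finite := E'.finite_toSet.subset hSDsub
  set A' : Finset (Sym2 V) := E'.filter (fun e => χ₁ e ≠ χ₂ e) with hA'def
  have hmem_out : ∀ (f : Sym2 V) (x : V), x ∈ f → x = f.out.1 ∨ x = f.out.2 := by
    intro f x hx
    have h : f = s(f.out.1, f.out.2) := by conv_lhs => rw [← f.out_eq]
    rw [h] at hx
    exact Sym2.mem_iff.mp hx
  -- witness predicates
  set P1 : Sym2 V → Sym2 V × V → Prop := fun e p =>
    p.1 ∈ E' ∧ χ₁ p.1 ≠ χ₂ p.1 ∧ p.2 ∈ e ∧ p.2 ∈ p.1 ∧ p.1 ≠ e ∧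
      χ₁ p.1 = χ₁ e ∧ χ₁ e ≠ none with hP1def
  set P2 : Sym2 V → Sym2 V × V → Prop := fun e p =>
    p.1 ∈ E' ∧ χ₂ p.1 ≠ χ₁ p.1 ∧ p.2 ∈ e ∧ p.2 ∈ p.1 ∧ p.1 ≠ e ∧
      χ₂ p.1 = χ₂ e ∧ χ₂ e ≠ none with hP2def
  have hP1F1 : ∀ e ∈ E', (∃ p, P1 e p) → e ∈ F1 := by
    rintro e he ⟨p, h₁, _, h₃, h₄, h₅, h₆, h₇⟩
    exact Or.inr ⟨he, h₇, p.1, h₁, h₅, ⟨p.2, h₃, h₄⟩, h₆⟩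
  have hP2F2 : ∀ e ∈ E', (∃ p, P2 e p) → e ∈ F2 := by
    rintro e he ⟨p, h₁, _, h₃, h₄, h₅, h₆, h₇⟩
    exact Or.inr ⟨he, h₇, p.1, h₁, h₅, ⟨p.2, h₃, h₄⟩, h₆⟩
  have hnA : ∀ e, e ∈ E' → e ∉ A' → χ₁ e = χ₂ e := by
    intro e he h
    by_contra hc
    exact h (Finset.mem_filter.mpr ⟨he, hc⟩)
  -- the injection
  set φ : Sym2 V → Sym2 V × V × Bool := fun e =>
    if e ∈ A' then (e, e.out.1, decide (e ∈ F1))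
    else if h : ∃ p, P1 e p then (h.choose.1, h.choose.2, false)
    else if h : ∃ p, P2 e p then (h.choose.1, h.choose.2, true)
    else (e, e.out.1, true) with hφdef
  have hφA : ∀ e ∈ A', φ e = (e, e.out.1, decide (e ∈ F1)) := by
    intro e he; simp only [hφdef, if_pos he]
  have hφ1 : ∀ e, e ∉ A' → ∀ h : (∃ p, P1 e p),
      (φ e).2.2 = false ∧ P1 e ((φ e).1, (φ e).2.1) := by
    intro e h0 h
    simp only [hφdef, if_neg h0, dif_pos h]
    exact ⟨trivial, h.choose_spec⟩
  have hφ2 : ∀ e, e ∉ A' → ¬(∃ p, P1 e p) → ∀ h : (∃ p, P2 e p),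
      (φ e).2.2 = true ∧ P2 e ((φ e).1, (φ e).2.1) := by
    intro e h0 h1 h
    simp only [hφdef, if_neg h0, dif_neg h1, dif_pos h]
    exact ⟨trivial, h.choose_spec⟩
  -- target token finset
  set t : Finset (Sym2 V × V × Bool) :=
    A'.biUnion (fun f => {f} ×ˢ ({f.out.1, f.out.2} : Finset V) ×ˢ
      (Finset.univ : Finset Bool)) with htdef
  have htcard : t.card ≤ 4 * A'.card := by
    calc t.card ≤ ∑ f ∈ A', ({f} ×ˢ ({f.out.1, f.out.2} : Finset V) ×ˢ
        (Finset.univ : Finset Bool)).card := Finset.card_biUnion_le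
    _ ≤ ∑ _f ∈ A', 4 := by
        refine Finset.sum_le_sum ?_
        intro f _
        rw [Finset.card_product, Finset.card_product, Finset.card_singleton,
          Finset.card_univ, Fintype.card_bool, one_mul]
        have : ({f.out.1, f.out.2} : Finset V).card ≤ 2 :=
          (Finset.card_insert_le _ _).trans (by simp)
        omega
    _ = 4 * A'.card := by rw [Finset.sum_const, smul_eq_mul, mul_comm]
  -- maps to
  have hmaps : ∀ e ∈ hfin.toFinset, φ e ∈ t := by
    intro e heS
    have heSD : e ∈ SD := hfin.mem_toFinset.mp heS
    have heE : e ∈ E' := hSDsub heSD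
    by_cases hA : e ∈ A'
    · rw [hφA e hA]
      simp only [htdef, Finset.mem_biUnion]
      exact ⟨e, hA, by simp; exact Classical.em _⟩
    · have heqc : χ₁ e = χ₂ e := hnA e heE hA
      have hdir := Set.mem_symmDiff.mp heSD
      rcases hdir with ⟨hin, hout⟩ | ⟨hin, hout⟩
      · have hex : ∃ p, P1 e p := witness_lemma E' χ₁ χ₂ e heE heqc hin hout
        obtain ⟨hb, hp⟩ := hφ1 e hA hex
        obtain ⟨h₁, h₂, h₃, h₄, _, _, _⟩ := hp
        simp only [htdef, Finset.mem_biUnion]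
        refine ⟨(φ e).1, Finset.mem_filter.mpr ⟨h₁, h₂⟩, ?_⟩
        simp only [Finset.mem_product, Finset.mem_singleton, Finset.mem_insert,
          Finset.mem_univ, and_true]
        exact ⟨trivial, by simpa using hmem_out _ _ h₄⟩
      · have hnex1 : ¬(∃ p, P1 e p) := fun h => hout (hP1F1 e heE h)
        have hex : ∃ p, P2 e p := by
          have := witness_lemma E' χ₂ χ₁ e heE heqc.symm hin hout
          exact this
        obtain ⟨hb, hp⟩ := hφ2 e hA hnex1 hex
        obtain ⟨h₁, h₂, h₃, h₄, _, _, _⟩ := hp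
        simp only [htdef, Finset.mem_biUnion]
        refine ⟨(φ e).1, Finset.mem_filter.mpr ⟨h₁, fun hc => h₂ hc.symm⟩, ?_⟩
        simp only [Finset.mem_product, Finset.mem_singleton, Finset.mem_insert,
          Finset.mem_univ, and_true]
        exact ⟨trivial, by simpa using hmem_out _ _ h₄⟩
  -- case analysis helper
  have hcase : ∀ e ∈ SD, e ∉ A' →
      ((φ e).2.2 = false ∧ e ∈ F1 ∧ e ∉ F2 ∧ P1 e ((φ e).1, (φ e).2.1)) ∨
      ((φ e).2.2 = true ∧ e ∈ F2 ∧ e ∉ F1 ∧ P2 e ((φ e).1, (φ e).2.1)) := by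
    intro e heSD hA
    have heE : e ∈ E' := hSDsub heSD
    have heqc := hnA e heE hA
    rcases Set.mem_symmDiff.mp heSD with ⟨hin, hout⟩ | ⟨hin, hout⟩
    · obtain ⟨hb, hp⟩ := hφ1 e hA (witness_lemma E' χ₁ χ₂ e heE heqc hin hout)
      exact Or.inl ⟨hb, hin, hout, hp⟩
    · have hnex1 : ¬(∃ p, P1 e p) := fun h => hout (hP1F1 e heE h)
      obtain ⟨hb, hp⟩ := hφ2 e hA hnex1
        (witness_lemma E' χ₂ χ₁ e heE heqc.symm hin hout)
      exact Or.inr ⟨hb, hin, hout, hp⟩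
  -- conflict helpers
  have hconf1 : ∀ g e x, g ∈ E' → e ∈ E' → g ≠ e → x ∈ g → x ∈ e →
      χ₁ g = χ₁ e → χ₁ g ≠ none → g ∈ F1 := by
    intro g e x hg he hne hxg hxe hcol hnn
    exact Or.inr ⟨hg, hnn, e, he, fun h => hne h.symm, ⟨x, hxg, hxe⟩, hcol.symm⟩
  have hconf2 : ∀ g e x, g ∈ E' → e ∈ E' → g ≠ e → x ∈ g → x ∈ e →
      χ₂ g = χ₂ e → χ₂ g ≠ none → g ∈ F2 := by
    intro g e x hg he hne hxg hxe hcol hnn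
    exact Or.inr ⟨hg, hnn, e, he, fun h => hne h.symm, ⟨x, hxg, hxe⟩, hcol.symm⟩
  -- mixed-case helper: e1 ∈ A', e2 ∉ A', equal tokens → contradiction/equality
  have hmixed : ∀ e1 e2, e1 ∈ SD → e2 ∈ SD → e1 ∈ A' → e2 ∉ A' →
      φ e1 = φ e2 → False := by
    intro e1 e2 he1SD he2SD h1A h2A heqφ
    have he1E : e1 ∈ E' := hSDsub he1SD
    have he2E : e2 ∈ E' := hSDsub he2SD
    rw [hφA e1 h1A] at heqφ
    have hfst : e1 = (φ e2).1 := congrArg Prod.fst heqφ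
    have hthd : decide (e1 ∈ F1) = (φ e2).2.2 :=
      congrArg (fun q => q.2.2) heqφ
    rcases hcase e2 he2SD h2A with ⟨hb, _hin, hout, hp⟩ | ⟨hb, _hin, hout, hp⟩
    · -- e2 in F1 \ F2; witness is e1; third component false so e1 ∉ F1
      have h1nF1 : e1 ∉ F1 := by
        rw [hb] at hthd
        simpa using of_decide_eq_false hthd
      obtain ⟨_, _, hx2, hx1, hne, hcol, hnn⟩ := hp
      rw [← hfst] at hx1 hne hcol
      exact h1nF1 (hconf1 e1 e2 ((φ e2).2.1) he1E he2E hne hx1 hx2 hcol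
        (by rw [hcol]; exact hnn))
    · -- e2 in F2 \ F1; third component true so e1 ∈ F1, hence e1 ∉ F2
      have h1F1 : e1 ∈ F1 := by
        rw [hb] at hthd
        simpa using of_decide_eq_true hthd
      have h1nF2 : e1 ∉ F2 := by
        rcases Set.mem_symmDiff.mp he1SD with ⟨_, h⟩ | ⟨_, h⟩
        · exact h
        · exact absurd h1F1 h
      obtain ⟨_, _, hx2, hx1, hne, hcol, hnn⟩ := hp
      rw [← hfst] at hx1 hne hcol
      exact h1nF2 (hconf2 e1 e2 ((φ e2).2.1) he1E he2E hne hx1 hx2 hcol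
        (by rw [hcol]; exact hnn))
  -- injectivity
  have hinj : Set.InjOn φ ↑hfin.toFinset := by
    intro e1 he1 e2 he2 heqφ
    have he1SD : e1 ∈ SD := hfin.mem_toFinset.mp he1
    have he2SD : e2 ∈ SD := hfin.mem_toFinset.mp he2
    have he1E : e1 ∈ E' := hSDsub he1SD
    have he2E : e2 ∈ E' := hSDsub he2SD
    by_cases h1A : e1 ∈ A' <;> by_cases h2A : e2 ∈ A'
    · rw [hφA e1 h1A, hφA e2 h2A] at heqφ
      exact congrArg Prod.fst heqφ
    · exact absurd (hmixed e1 e2 he1SD he2SD h1A h2A heqφ) (fun h => h)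
    · exact absurd (hmixed e2 e1 he2SD he1SD h2A h1A heqφ.symm) (fun h => h)
    · by_contra hne
      rcases hcase e1 he1SD h1A with ⟨hb1, hin1, hout1, hp1⟩ | ⟨hb1, hin1, hout1, hp1⟩ <;>
        rcases hcase e2 he2SD h2A with ⟨hb2, hin2, hout2, hp2⟩ | ⟨hb2, hin2, hout2, hp2⟩
      · -- both dir1
        obtain ⟨_, _, hx1e, _, _, hcol1, hnn1⟩ := hp1
        obtain ⟨_, _, hx2e, _, _, hcol2, _⟩ := hp2
        have hfeq : (φ e1).1 = (φ e2).1 := congrArg Prod.fst heqφ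
        have hxeq : (φ e1).2.1 = (φ e2).2.1 := congrArg (fun q => q.2.1) heqφ
        have hcc : χ₁ e1 = χ₁ e2 := by rw [← hcol1, hfeq, hcol2]
        have hx2e1 : (φ e1).2.1 ∈ e2 := by rw [hxeq]; exact hx2e
        have hceq1 := hnA e1 he1E h1A
        have hceq2 := hnA e2 he2E h2A
        exact hout1 (hconf2 e1 e2 ((φ e1).2.1) he1E he2E hne hx1e hx2e1
          (by rw [← hceq1, ← hceq2]; exact hcc) (by rw [← hceq1]; exact hnn1))
      · have h := congrArg (fun q : Sym2 V × V × Bool => q.2.2) heqφ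
        simp only [hb1, hb2] at h
        exact Bool.noConfusion h
      · have h := congrArg (fun q : Sym2 V × V × Bool => q.2.2) heqφ
        simp only [hb1, hb2] at h
        exact Bool.noConfusion h
      · -- both dir2
        obtain ⟨_, _, hx1e, _, _, hcol1, hnn1⟩ := hp1
        obtain ⟨_, _, hx2e, _, _, hcol2, _⟩ := hp2
        have hfeq : (φ e1).1 = (φ e2).1 := congrArg Prod.fst heqφ
        have hxeq : (φ e1).2.1 = (φ e2).2.1 := congrArg (fun q => q.2.1) heqφ
        have hcc : χ₂ e1 = χ₂ e2 := by rw [← hcol1, hfeq, hcol2]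
        have hx2e1 : (φ e1).2.1 ∈ e2 := by rw [hxeq]; exact hx2e
        have hceq1 := hnA e1 he1E h1A
        have hceq2 := hnA e2 he2E h2A
        exact hout1 (hconf1 e1 e2 ((φ e1).2.1) he1E he2E hne hx1e hx2e1
          (by rw [hceq1, hceq2]; exact hcc) (by rw [hceq1]; exact hnn1))
  -- conclusion
  have hAeq : {e | e ∈ E' ∧ χ₁ e ≠ χ₂ e} = (A' : Set (Sym2 V)) := by
    ext e; simp [hA'def]
  calc SD.ncard = hfin.toFinset.card := Set.ncard_eq_toFinset_card _ hfin
    _ ≤ t.card := Finset.card_le_card_of_injOn φ hmaps hinj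
    _ ≤ 4 * A'.card := htcard
    _ = 4 * {e | e ∈ E' ∧ χ₁ e ≠ χ₂ e}.ncard := by
        rw [hAeq, Set.ncard_coe_finset]


/-- Let `e* ∉ E` be an edge and `E' := E ∪ {e*}`. Let `χ : E → C ∪ {⊥}` and
`χ' : E' → C ∪ {⊥}` be tentative colorings, let `χ̂ : E' → C ∪ {⊥}` extend `χ` by
`χ̂(e*) := ⊥`, and set `A := {e ∈ E' : χ̂(e) ≠ χ'(e)}`. Then
`|F(E, χ) ⊕ F(E', χ')| ≤ 4·|A| + 1`. -/
theorem stmt_2 {V : Type*} [DecidableEq V] {C : Type*} (E : Finset (Sym2 V))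
    (hE : ∀ e ∈ E, ¬ e.IsDiag)
    (estar : Sym2 V) (hestar : estar ∉ E) (hestar' : ¬ estar.IsDiag)
    (χ χ' : Sym2 V → Option C) :
    (symmDiff (failedSet (E : Set (Sym2 V)) χ)
        (failedSet ((insert estar E : Finset (Sym2 V)) : Set (Sym2 V)) χ')).ncard ≤
      4 * {e | e ∈ (insert estar E : Finset (Sym2 V)) ∧
            Function.update χ estar none e ≠ χ' e}.ncard + 1 := by
  classical
  set E' : Finset (Sym2 V) := insert estar E with hE'def
  set χh : Sym2 V → Option C := Function.update χ estar none with hχhdef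
  have hupd_ne : ∀ e ∈ E, χh e = χ e := by
    intro e he
    refine Function.update_of_ne (fun h => hestar ?_) _ _
    rw [← h]; exact he
  have hupd_star : χh estar = none := Function.update_self _ _ _
  have hmemE' : ∀ e ∈ E, e ∈ E' := fun e he => Finset.mem_insert_of_mem he
  have hstep : failedSet (E' : Set (Sym2 V)) χh =
      insert estar (failedSet (E : Set (Sym2 V)) χ) := by
    ext e
    constructor
    · rintro (⟨heE', hnone⟩ | ⟨heE', hne, f, hfE', hfe, hadj, hcol⟩)
      · by_cases h : e = estar
        · exact Set.mem_insert_iff.mpr (Or.inl h)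
        · have heE : e ∈ E := by
            rcases Finset.mem_insert.mp (Finset.mem_coe.mp heE') with h' | h'
            · exact absurd h' h
            · exact h'
          exact Set.mem_insert_iff.mpr (Or.inr
            (Or.inl ⟨heE, by rw [← hupd_ne e heE]; exact hnone⟩))
      · have hene : e ≠ estar := by
          intro h; rw [h, hupd_star] at hne; exact hne rfl
        have heE : e ∈ E := by
          rcases Finset.mem_insert.mp (Finset.mem_coe.mp heE') with h' | h'
          · exact absurd h' hene
          · exact h'
        have hfne : f ≠ estar := by
          intro h; rw [h, hupd_star] at hcol; exact hne hcol.symm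
        have hfE : f ∈ E := by
          rcases Finset.mem_insert.mp (Finset.mem_coe.mp hfE') with h' | h'
          · exact absurd h' hfne
          · exact h'
        refine Set.mem_insert_iff.mpr (Or.inr (Or.inr
          ⟨heE, by rw [← hupd_ne e heE]; exact hne, f, hfE, hfe, hadj, ?_⟩))
        rw [← hupd_ne f hfE, ← hupd_ne e heE]; exact hcol
    · intro h
      rcases Set.mem_insert_iff.mp h with h | h
      · subst h
        exact Or.inl ⟨Finset.mem_coe.mpr (Finset.mem_insert_self _ _), hupd_star⟩
      · rcases h with ⟨heE, hnone⟩ | ⟨heE, hne, f, hfE, hfe, hadj, hcol⟩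
        · exact Or.inl ⟨Finset.mem_coe.mpr (hmemE' e heE),
            by rw [hupd_ne e heE]; exact hnone⟩
        · refine Or.inr ⟨Finset.mem_coe.mpr (hmemE' e heE),
            by rw [hupd_ne e heE]; exact hne, f, Finset.mem_coe.mpr (hmemE' f hfE),
            hfe, hadj, ?_⟩
          rw [hupd_ne f hfE, hupd_ne e heE]; exact hcol
  set F' := failedSet (E' : Set (Sym2 V)) χ' with hF'def
  set SD' := symmDiff (failedSet (E' : Set (Sym2 V)) χh) F' with hSD'def
  have hsub' : SD' ⊆ (E' : Set (Sym2 V)) := by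
    intro a ha
    rcases Set.mem_symmDiff.mp ha with ⟨h, _⟩ | ⟨h, _⟩
    · rcases h with ⟨h', _⟩ | ⟨h', _⟩ <;> exact h'
    · rcases h with ⟨h', _⟩ | ⟨h', _⟩ <;> exact h'
  have hfin' : SD'.Finite := E'.finite_toSet.subset hsub'
  have hsubset : symmDiff (failedSet (E : Set (Sym2 V)) χ) F' ⊆ insert estar SD' := by
    intro a ha
    by_cases h : a = estar
    · exact Set.mem_insert_iff.mpr (Or.inl h)
    · refine Set.mem_insert_iff.mpr (Or.inr ?_)
      rw [hSD'def, hstep]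
      rcases Set.mem_symmDiff.mp ha with ⟨hin, hout⟩ | ⟨hin, hout⟩
      · exact Set.mem_symmDiff.mpr (Or.inl ⟨Set.mem_insert_of_mem _ hin, hout⟩)
      · refine Set.mem_symmDiff.mpr (Or.inr ⟨hin, fun hc => hout ?_⟩)
        rcases Set.mem_insert_iff.mp hc with h' | h'
        · exact absurd h' h
        · exact h'
  calc (symmDiff (failedSet (E : Set (Sym2 V)) χ) F').ncard
      ≤ (insert estar SD').ncard :=
        Set.ncard_le_ncard hsubset (hfin'.insert estar)
    _ ≤ SD'.ncard + 1 := Set.ncard_insert_le _ _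
    _ ≤ 4 * {e | e ∈ E' ∧ χh e ≠ χ' e}.ncard + 1 :=
        Nat.add_le_add_right (key_count E' χh χ') 1
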